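/- Let (V, E, r) be a rooted tree, S a sweep-cover, S_i ∈ S a member, V_i = S_i ∪ {ancestors of elements of S_i} ∪ {descendants of elements of S_i}, and E_i the restriction of E to V_i. Then (V_i, E_i, r) is itself a rooted tree with root r, and the one-member collection {S_i} is a sweep-cover of (V_i, E_i, r). -/

import Mathlib

/-- A rooted tree: no edge enters the root, every non-root vertex has a unique parent,
and every vertex is reachable from the root. -/
structure IsRootedTree {V : Type*} (E : V → V → Prop) (r : V) : Prop where
  not_edge_root : ∀ u, ¬ E u r
  unique_parent : ∀ v, v ≠ r → ∃! u, E u v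
  reachable : ∀ v, Relation.ReflTransGen E r v

/-- A sweep-cover of a rooted tree `(V, E, r)`. -/
structure IsSweepCover {V : Type*} (E : V → V → Prop) (r : V) (S : Set (Set V)) : Prop where
  finite : S.Finite
  mem_finite : ∀ T ∈ S, T.Finite
  mem_nonempty : ∀ T ∈ S, T.Nonempty
  pairwiseDisjoint : ∀ T ∈ S, ∀ T' ∈ S, T ≠ T' → Disjoint T T'
  siblings : ∀ T ∈ S, T = {r} ∨ ∃ p, ∀ v ∈ T, E p v
  covers : ∀ v : V, (∃ T ∈ S, v ∈ T) ∨ (∃ w ∈ ⋃₀ S, Relation.TransGen E v w) ∨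
      (∃ w ∈ ⋃₀ S, Relation.TransGen E w v)
  antichain : ∀ u ∈ ⋃₀ S, ∀ v ∈ ⋃₀ S, u ≠ v → ¬ Relation.TransGen E u v

/-- The vertex set of the induced subgraph of a member `Si` of a sweep-cover:
`Si` together with all ancestors and all descendants of its elements. -/
def inducedVertexSet {V : Type*} (E : V → V → Prop) (Si : Set V) : Set V :=
  Si ∪ {u | ∃ x ∈ Si, Relation.TransGen E u x} ∪ {u | ∃ x ∈ Si, Relation.TransGen E x u}

/-- Ancestors of a common vertex are comparable in a rooted tree. -/
lemma anc_total {V : Type*} {E : V → V → Prop} {r : V} (hT : IsRootedTree E r)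
    {a v : V} (h : Relation.ReflTransGen E a v) :
    ∀ b, Relation.ReflTransGen E b v →
      Relation.ReflTransGen E a b ∨ Relation.ReflTransGen E b a := by
  induction h with
  | refl => exact fun b hb => Or.inr hb
  | @tail c d hac hcd ih =>
    intro b hbd
    rcases hbd.cases_tail with rfl | ⟨w, hbw, hwd⟩
    · exact Or.inl (hac.tail hcd)
    · have hdr : d ≠ r := fun h => hT.not_edge_root c (h ▸ hcd)
      obtain ⟨u, -, huniq⟩ := hT.unique_parent d hdr
      have : w = c := (huniq w hwd).trans (huniq c hcd).symm
      exact ih b (this ▸ hbw)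

/-- `inducedVertexSet` is closed under taking ancestors. -/
lemma mem_induced_of_anc {V : Type*} {E : V → V → Prop} {r : V} (hT : IsRootedTree E r)
    {Si : Set V} {v w : V} (hv : v ∈ inducedVertexSet E Si)
    (hwv : Relation.ReflTransGen E w v) : w ∈ inducedVertexSet E Si := by
  rcases Relation.reflTransGen_iff_eq_or_transGen.mp hwv with rfl | hwv'
  · exact hv
  rcases hv with (hv | ⟨x, hx, hvx⟩) | ⟨x, hx, hxv⟩
  · exact Or.inl (Or.inr ⟨v, hv, hwv'⟩)
  · exact Or.inl (Or.inr ⟨x, hx, hwv'.trans hvx⟩)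
  · rcases anc_total hT hwv x hxv.to_reflTransGen with h | h
    · rcases Relation.reflTransGen_iff_eq_or_transGen.mp h with rfl | h'
      · exact Or.inl (Or.inl hx)
      · exact Or.inl (Or.inr ⟨x, hx, h'⟩)
    · rcases Relation.reflTransGen_iff_eq_or_transGen.mp h with rfl | h'
      · exact Or.inl (Or.inl hx)
      · exact Or.inr ⟨x, hx, h'⟩

theorem inducedSubgraph_rootedTree_and_singleton_sweepCover
    {V : Type*} (E : V → V → Prop) (r : V) (hT : IsRootedTree E r)
    (S : Set (Set V)) (hS : IsSweepCover E r S)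
    (Si : Set V) (hSi : Si ∈ S) :
    ∃ hr : r ∈ inducedVertexSet E Si,
      IsRootedTree (fun a b : ↥(inducedVertexSet E Si) => E ↑a ↑b) ⟨r, hr⟩ ∧
      IsSweepCover (fun a b : ↥(inducedVertexSet E Si) => E ↑a ↑b) ⟨r, hr⟩
        {Subtype.val ⁻¹' Si} := by
  set Vi := inducedVertexSet E Si with hVi
  obtain ⟨x0, hx0⟩ := hS.mem_nonempty Si hSi
  have hSiVi : Si ⊆ Vi := fun y hy => Or.inl (Or.inl hy)
  have hr : r ∈ Vi := by
    rcases Relation.reflTransGen_iff_eq_or_transGen.mp (hT.reachable x0) with rfl | h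
    · exact hSiVi hx0
    · exact Or.inl (Or.inr ⟨x0, hx0, h⟩)
  refine ⟨hr, ?_, ?_⟩
  · constructor
    · exact fun u h => hT.not_edge_root u h
    · rintro ⟨v, hv⟩ hvr
      have hvr' : v ≠ r := fun h => hvr (Subtype.ext h)
      obtain ⟨u, hu, huniq⟩ := hT.unique_parent v hvr'
      have huVi : u ∈ Vi := mem_induced_of_anc hT hv (Relation.ReflTransGen.single hu)
      exact ⟨⟨u, huVi⟩, hu, fun w hw => Subtype.ext (huniq w hw)⟩
    · rintro ⟨v, hv⟩
      have key : ∀ w, Relation.ReflTransGen E r w → ∀ hw : w ∈ Vi,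
          Relation.ReflTransGen (fun a b : Vi => E ↑a ↑b) ⟨r, hr⟩ ⟨w, hw⟩ := by
        intro w h
        induction h with
        | refl => exact fun _ => Relation.ReflTransGen.refl
        | @tail c d hrc hcd ih =>
          intro hd
          have hc : c ∈ Vi := mem_induced_of_anc hT hd (Relation.ReflTransGen.single hcd)
          exact (ih hc).tail hcd
      exact key v (hT.reachable v) hv
  · have hUnion : ⋃₀ ({Subtype.val ⁻¹' Si} : Set (Set Vi)) = Subtype.val ⁻¹' Si := by
      simp
    constructor
    · exact Set.finite_singleton _
    · rintro T rfl
      exact Set.Finite.preimage (Subtype.val_injective.injOn) (hS.mem_finite Si hSi)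
    · rintro T rfl
      exact ⟨⟨x0, hSiVi hx0⟩, hx0⟩
    · rintro T rfl T' rfl h
      exact absurd rfl h
    · rintro T rfl
      rcases hS.siblings Si hSi with h1 | ⟨p, hp⟩
      · left
        ext ⟨y, hy⟩
        simp only [Set.mem_preimage, Set.mem_singleton_iff, h1]
        exact ⟨fun h => Subtype.ext h, fun h => congrArg Subtype.val h⟩
      · right
        have hpVi : p ∈ Vi :=
          Or.inl (Or.inr ⟨x0, hx0, Relation.TransGen.single (hp x0 hx0)⟩)
        exact ⟨⟨p, hpVi⟩, fun v hv => hp v.1 hv⟩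
    · -- covers
      rintro ⟨v, hv⟩
      have liftAnc : ∀ {a x : V}, Relation.TransGen E a x → ∀ hx' : x ∈ Si,
          ∀ ha : a ∈ Vi,
          Relation.TransGen (fun a b : Vi => E ↑a ↑b) ⟨a, ha⟩ ⟨x, hSiVi hx'⟩ := by
        intro a x h
        induction h using Relation.TransGen.head_induction_on with
        | single hax => exact fun hx' ha => Relation.TransGen.single hax
        | @head b c hbc hcx ih =>
          intro hx' hb
          have hc : c ∈ Vi := Or.inl (Or.inr ⟨_, hx', hcx⟩)
          exact Relation.TransGen.head hbc (ih hx' hc)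
      have liftDesc : ∀ {x a : V}, Relation.TransGen E x a → ∀ hx' : x ∈ Si,
          ∀ ha : a ∈ Vi,
          Relation.TransGen (fun a b : Vi => E ↑a ↑b) ⟨x, hSiVi hx'⟩ ⟨a, ha⟩ := by
        intro x a h
        induction h with
        | single hxa => exact fun hx' ha => Relation.TransGen.single hxa
        | @tail c d hxc hcd ih =>
          intro hx' hd
          have hc : c ∈ Vi := Or.inr ⟨_, hx', hxc⟩
          exact (ih hx' hc).tail hcd
      rcases id hv with (hv' | ⟨x, hx, hvx⟩) | ⟨x, hx, hxv⟩
      · exact Or.inl ⟨Subtype.val ⁻¹' Si, rfl, hv'⟩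
      · refine Or.inr (Or.inl ⟨⟨x, hSiVi hx⟩, ?_, liftAnc hvx hx hv⟩)
        rw [hUnion]; exact hx
      · refine Or.inr (Or.inr ⟨⟨x, hSiVi hx⟩, ?_, liftDesc hxv hx hv⟩)
        rw [hUnion]; exact hx
    · -- antichain
      intro u hu v hv huv h
      rw [hUnion] at hu hv
      have h' : Relation.TransGen E ↑u ↑v :=
        Relation.TransGen.lift Subtype.val (fun _ _ hab => hab) u v h
      exact hS.antichain ↑u ⟨Si, hSi, hu⟩ ↑v ⟨Si, hSi, hv⟩
        (fun he => huv (Subtype.ext he)) h'
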